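/- For n ≥ 1 and 0 ≤ k ≤ n-1, the number of properly-marked {L,R}-words of length n-1 with exactly k marked L-elements equals the number of Kimberling paths from (0,0) to (n-k, k), and both equal ∑_{r=0}^{n-k-1} C(n-k-1, r) · C(r+k, r). -/

import Mathlib

/-- The alphabet {Lᵘ, Lᵐ, R} for properly-marked {L,R}-words. -/
inductive PMLetter
  | Lu : PMLetter
  | Lm : PMLetter
  | R : PMLetter
deriving DecidableEq

/-- A word is properly marked if no occurrence of Lᵐ is immediately followed by R. -/
def ProperlyMarked (w : List PMLetter) : Prop :=
  w.Chain' (fun a b => a = PMLetter.Lm → b ≠ PMLetter.R)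

def pathEnd (l : List (ℕ × ℕ)) : ℕ × ℕ := ((l.map Prod.fst).sum, (l.map Prod.snd).sum)

/-- Kimberling paths from (0,0) to (i,j): each step has strictly positive first coordinate. -/
def Kimb (i j : ℕ) : Set (List (ℕ × ℕ)) :=
  {l | (∀ s ∈ l, 1 ≤ s.1) ∧ pathEnd l = (i, j)}

open Finset

def Sf (i j : ℕ) : ℕ := ∑ r ∈ range i, Nat.choose (i - 1) r * Nat.choose (r + j) r

lemma hockey (s j : ℕ) : ∑ b ∈ range (j+1), (s + b).choose b = (s + j + 1).choose j := by
  have h1 : ∀ b, (s + b).choose b = (s + b).choose s := fun b =>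
    Nat.choose_symm_of_eq_add (by omega)
  have h2 : ∑ b ∈ range (j+1), (s + b).choose s = ∑ m ∈ Icc s (s + j), m.choose s := by
    rw [range_eq_Ico]
    exact Finset.sum_nbij' (fun b => s + b) (fun m => m - s)
      (by intro a ha; simp at ha ⊢; omega)
      (by intro a ha; simp at ha ⊢; omega)
      (by intro a ha; omega)
      (by intro a ha; simp only [mem_Icc] at ha; omega)
      (by intro a ha; rfl)
  simp only [h1]
  rw [h2, Nat.sum_Icc_choose]
  exact Nat.choose_symm_of_eq_add (by omega)

lemma Sf_one (j : ℕ) : Sf 1 j = 1 := by simp [Sf]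

lemma L1 (i j : ℕ) : Sf (i+2) j
    = Sf (i+1) j + ∑ r ∈ range (i+1), Nat.choose i r * Nat.choose (r+j+1) (r+1) := by
  have e1 : Sf (i+2) j
      = (∑ r ∈ range (i+1), Nat.choose (i+1) (r+1) * Nat.choose (r+j+1) (r+1)) + 1 := by
    rw [Sf, Finset.sum_range_succ']
    simp only [show i+2-1 = i+1 from rfl]
    congr 1
    · apply Finset.sum_congr rfl; intro r _; congr 2 <;> omega
    · simp
  have e2 : Sf (i+1) j
      = (∑ r ∈ range (i+1), Nat.choose i (r+1) * Nat.choose (r+j+1) (r+1)) + 1 := by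
    rw [Sf, Finset.sum_range_succ', Finset.sum_range_succ]
    simp only [Nat.add_sub_cancel, Nat.choose_succ_self, zero_mul, add_zero]
    congr 1
    · apply Finset.sum_congr rfl; intro r _; congr 2 <;> omega
    · simp
  rw [e1, e2]
  have e3 : ∀ r, Nat.choose (i+1) (r+1) * Nat.choose (r+j+1) (r+1)
      = Nat.choose i r * Nat.choose (r+j+1) (r+1) + Nat.choose i (r+1) * Nat.choose (r+j+1) (r+1) := by
    intro r; rw [Nat.choose_succ_succ, add_mul]
  simp only [e3, Finset.sum_add_distrib]
  ring

lemma daggerS (i j : ℕ) : Sf (i+2) j = Sf (i+1) j + ∑ b ∈ range (j+1), Sf (i+1) b := by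
  rw [L1]
  congr 1
  have e : ∀ r, Nat.choose (r+j+1) (r+1) = ∑ b ∈ range (j+1), Nat.choose (r+b) b := by
    intro r
    rw [hockey]
    exact Nat.choose_symm_of_eq_add (by omega)
  calc ∑ r ∈ range (i+1), Nat.choose i r * Nat.choose (r+j+1) (r+1)
      = ∑ r ∈ range (i+1), ∑ b ∈ range (j+1), Nat.choose i r * Nat.choose (r+b) b := by
        apply Finset.sum_congr rfl; intro r _; rw [e, Finset.mul_sum]
    _ = ∑ b ∈ range (j+1), ∑ r ∈ range (i+1), Nat.choose i r * Nat.choose (r+b) b :=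
        Finset.sum_comm
    _ = ∑ b ∈ range (j+1), Sf (i+1) b := by
        apply Finset.sum_congr rfl; intro b _
        rw [Sf]
        apply Finset.sum_congr rfl; intro r _
        simp only [Nat.add_sub_cancel]
        congr 1
        exact Nat.choose_symm_of_eq_add (by omega)

lemma pascalS (i j : ℕ) :
    Sf (i+1) (j+1) + Sf i j = 2 * Sf i (j+1) + Sf (i+1) j := by
  cases i with
  | zero => simp [Sf_one, Sf]
  | succ i' =>
    have h1 := L1 i' (j+1)
    have h2 := L1 i' j
    have e : ∀ r, Nat.choose i' r * Nat.choose (r+(j+1)+1) (r+1)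
        = Nat.choose i' r * Nat.choose (r+j+1) r + Nat.choose i' r * Nat.choose (r+j+1) (r+1) := by
      intro r
      have : Nat.choose (r+(j+1)+1) (r+1) = Nat.choose (r+j+1) r + Nat.choose (r+j+1) (r+1) := by
        have := Nat.choose_succ_succ (r+j+1) r
        rw [show r+(j+1)+1 = r+j+1+1 by omega, this]
      rw [this, mul_add]
    rw [h1]
    have h3 : ∑ r ∈ range (i'+1), Nat.choose i' r * Nat.choose (r+(j+1)+1) (r+1)
        = Sf (i'+1) (j+1) + ∑ r ∈ range (i'+1), Nat.choose i' r * Nat.choose (r+j+1) (r+1) := by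
      simp only [e, Finset.sum_add_distrib]
      rw [Sf]
      simp only [Nat.add_sub_cancel]
      congr 1
    rw [show i'+1+1 = i'+2 from rfl, h3]
    rw [show i'+1+1 = i'+2 from rfl] at h2 ⊢
    omega

lemma rectS (i j : ℕ) : Sf (i+1) j = 1 + ∑ a ∈ range i, ∑ b ∈ range (j+1), Sf (a+1) b := by
  induction i with
  | zero => simp [Sf_one]
  | succ i ih =>
    rw [Finset.sum_range_succ, daggerS, ih]
    ring
open Finset

def KF : ℕ → ℕ → Finset (List (ℕ × ℕ))
  | 0, 0 => {[]}
  | 0, _ + 1 => ∅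
  | i + 1, j =>
    (Finset.range (i+1) ×ˢ Finset.range (j+1)).biUnion
      (fun p => (KF (i - p.1) (j - p.2)).image (List.cons (p.1 + 1, p.2)))
termination_by i _ => i
decreasing_by omega

lemma KF_card (i j : ℕ) : (KF (i+1) j).card
    = ∑ p ∈ Finset.range (i+1) ×ˢ Finset.range (j+1), (KF (i - p.1) (j - p.2)).card := by
  rw [KF, Finset.card_biUnion]
  · refine Finset.sum_congr rfl fun p _ => ?_
    exact Finset.card_image_of_injective _ (fun a b h => by simpa using h)
  · intro p _ q _ hpq
    simp only [Finset.disjoint_left, Finset.mem_image]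
    rintro x ⟨a, _, rfl⟩ ⟨b, _, hb⟩
    apply hpq
    have := (List.cons_eq_cons.mp hb).1
    ext <;> simp_all

lemma KF_coe (i : ℕ) : ∀ j, ↑(KF i j) = Kimb i j := by
  induction i using Nat.strong_induction_on with
  | _ i ih =>
    intro j
    ext l
    simp only [Finset.coe_sort_coe, Finset.mem_coe, Kimb, Set.mem_setOf_eq]
    match i, j with
    | 0, 0 =>
      rw [KF]
      simp only [Finset.mem_singleton]
      constructor
      · rintro rfl; exact ⟨by simp, rfl⟩
      · rintro ⟨h1, h2⟩
        cases l with
        | nil => rfl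
        | cons s t =>
          exfalso
          have : 1 ≤ s.1 := h1 s (by simp)
          have : pathEnd (s :: t) = (0, 0) := h2
          simp [pathEnd] at this
          omega
    | 0, j + 1 =>
      rw [KF]
      simp only [Finset.notMem_empty, false_iff, not_and]
      intro h1 h2
      cases l with
      | nil => simp [pathEnd, Prod.ext_iff] at h2
      | cons s t =>
        have : 1 ≤ s.1 := h1 s (by simp)
        simp [pathEnd, Prod.ext_iff] at h2
        omega
    | i + 1, j =>
      rw [KF]
      simp only [Finset.mem_biUnion, Finset.mem_product, Finset.mem_range, Finset.mem_image]
      constructor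
      · rintro ⟨⟨a, b⟩, ⟨ha, hb⟩, t, ht, rfl⟩
        have ht' : t ∈ Kimb (i - a) (j - b) := by
          rw [← ih (i - a) (by omega) (j - b)]
          exact Finset.mem_coe.mpr ht
        obtain ⟨h1, h2⟩ := ht'
        refine ⟨?_, ?_⟩
        · rintro s hs
          rcases List.mem_cons.mp hs with rfl | hs
          · simp
          · exact h1 s hs
        · simp only [pathEnd, Prod.ext_iff] at h2 ⊢
          simp only [List.map_cons, List.sum_cons]
          constructor <;> simp_all <;> omega
      · rintro ⟨h1, h2⟩
        cases l with
        | nil => simp [pathEnd, Prod.ext_iff] at h2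
        | cons s t =>
          obtain ⟨a', b⟩ := s
          have ha' : 1 ≤ a' := h1 (a', b) (by simp)
          simp only [pathEnd, List.map_cons, List.sum_cons, Prod.ext_iff] at h2
          refine ⟨(a' - 1, b), ⟨by omega, by omega⟩, t, ?_, by simp; omega⟩
          have hco := ih (i - (a' - 1)) (by omega) (j - b)
          have hm : t ∈ Kimb (i - (a' - 1)) (j - b) := by
            refine ⟨fun s hs => h1 s (List.mem_cons_of_mem _ hs), ?_⟩
            simp only [pathEnd, Prod.ext_iff] at h2 ⊢
            constructor <;> omega
          rw [← hco] at hm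
          exact Finset.mem_coe.mp hm

lemma sum_reflect' (F : ℕ → ℕ) (n : ℕ) :
    ∑ x ∈ range (n+1), F (n - x) = ∑ x ∈ range (n+1), F x := by
  have := Finset.sum_range_reflect F (n+1)
  simpa using this

lemma KF_zero_card (b : ℕ) : (KF 0 b).card = if b = 0 then 1 else 0 := by
  cases b <;> simp [KF]

lemma KF_card_S (i : ℕ) : ∀ j, (KF (i+1) j).card = Sf (i+1) j := by
  induction i using Nat.strong_induction_on with
  | _ i ih =>
    intro j
    rw [KF_card, Finset.sum_product]
    have norm : ∀ x y : ℕ, (KF (i - (x, y).1) (j - (x, y).2)).card = (KF (i-x) (j-y)).card :=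
      fun _ _ => rfl
    simp only [norm]
    have inner : ∀ a, ∑ b ∈ range (j+1), (KF (i - a) (j - b)).card
        = ∑ b ∈ range (j+1), (KF (i - a) b).card := fun a =>
      sum_reflect' (fun b => (KF (i - a) b).card) j
    simp only [inner]
    rw [sum_reflect' (fun a => ∑ b ∈ range (j+1), (KF a b).card) i]
    rw [Finset.sum_range_succ', rectS]
    have last : ∑ b ∈ range (j+1), (KF 0 b).card = 1 := by
      simp only [KF_zero_card]
      rw [Finset.sum_ite_eq' (range (j+1)) 0 (fun _ => 1)]
      simp
    rw [last, add_comm _ 1]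
    congr 1
    refine Finset.sum_congr rfl fun a ha => ?_
    refine Finset.sum_congr rfl fun b _ => ?_
    exact ih a (Finset.mem_range.mp ha) b

def WF : Bool → ℕ → ℕ → Finset (List PMLetter)
  | _, 0, 0 => {[]}
  | _, 0, _ + 1 => ∅
  | f, m + 1, 0 =>
      (WF true m 0).image (List.cons PMLetter.Lu) ∪
      (if f then (WF true m 0).image (List.cons PMLetter.R) else ∅)
  | f, m + 1, k + 1 =>
      (WF true m (k+1)).image (List.cons PMLetter.Lu) ∪
      (if f then (WF true m (k+1)).image (List.cons PMLetter.R) else ∅) ∪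
      (WF false m k).image (List.cons PMLetter.Lm)

lemma WF_mem (m : ℕ) : ∀ (f : Bool) (k : ℕ) (w : List PMLetter),
    w ∈ WF f m k ↔ (w.length = m ∧ ProperlyMarked w ∧ w.count PMLetter.Lm = k
      ∧ (f = false → w.head? ≠ some PMLetter.R)) := by
  induction m with
  | zero =>
    rintro f (_ | k) w
    · rw [WF]
      simp only [Finset.mem_singleton]
      constructor
      · rintro rfl; simp [ProperlyMarked]; exact List.IsChain.nil
      · rintro ⟨h, -⟩; exact List.length_eq_zero_iff.mp h
    · rw [WF]
      simp only [Finset.notMem_empty, false_iff, not_and]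
      intro h
      rw [List.length_eq_zero_iff.mp h]
      simp
  | succ m ih =>
    rintro f (_ | k) w
    · rw [WF]
      simp only [Finset.mem_union, Finset.mem_image]
      constructor
      · rintro (⟨t, ht, rfl⟩ | hR)
        · obtain ⟨h1, h2, h3, -⟩ := (ih true 0 t).mp ht
          refine ⟨by simp [h1], ?_, by simp [h3], by simp⟩
          exact List.isChain_cons.mpr ⟨by simp, h2⟩
        · have hf : f = true := by
            by_contra hf'
            simp [Bool.not_eq_true] at hf'
            simp [hf'] at hR
          simp [hf] at hR
          obtain ⟨t, ht, rfl⟩ := hR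
          obtain ⟨h1, h2, h3, -⟩ := (ih true 0 t).mp ht
          refine ⟨by simp [h1], ?_, by simp [h3], by simp [hf]⟩
          exact List.isChain_cons.mpr ⟨by simp, h2⟩
      · rintro ⟨h1, h2, h3, h4⟩
        cases w with
        | nil => simp at h1
        | cons a t =>
          have hlen : t.length = m := by simpa using h1
          have hpm : ProperlyMarked t := (List.isChain_cons.mp h2).2
          cases a with
          | Lu =>
            left
            exact ⟨t, (ih true 0 t).mpr ⟨hlen, hpm, by simpa using h3, by simp⟩, rfl⟩
          | Lm => simp at h3
          | R =>
            right
            have hf : f = true := by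
              cases f
              · exact absurd (h4 rfl) (by simp)
              · rfl
            subst hf
            simp only [if_true, Finset.mem_image]
            exact ⟨t, (ih true 0 t).mpr ⟨hlen, hpm, by simpa using h3, by simp⟩, rfl⟩
    · rw [WF]
      simp only [Finset.mem_union, Finset.mem_image]
      constructor
      · rintro ((⟨t, ht, rfl⟩ | hR) | ⟨t, ht, rfl⟩)
        · obtain ⟨h1, h2, h3, -⟩ := (ih true (k+1) t).mp ht
          refine ⟨by simp [h1], ?_, by simp [h3], by simp⟩
          exact List.isChain_cons.mpr ⟨by simp, h2⟩
        · have hf : f = true := by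
            by_contra hf'
            simp [Bool.not_eq_true] at hf'
            simp [hf'] at hR
          simp [hf] at hR
          obtain ⟨t, ht, rfl⟩ := hR
          obtain ⟨h1, h2, h3, -⟩ := (ih true (k+1) t).mp ht
          refine ⟨by simp [h1], ?_, by simp [h3], by simp [hf]⟩
          exact List.isChain_cons.mpr ⟨by simp, h2⟩
        · obtain ⟨h1, h2, h3, h4⟩ := (ih false k t).mp ht
          refine ⟨by simp [h1], ?_, by simp [h3], by simp⟩
          refine List.isChain_cons.mpr ⟨?_, h2⟩
          intro y hy _
          intro hcon
          exact (h4 rfl) (by rw [hy, hcon])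
      · rintro ⟨h1, h2, h3, h4⟩
        cases w with
        | nil => simp at h1
        | cons a t =>
          have hlen : t.length = m := by simpa using h1
          have hpm : ProperlyMarked t := (List.isChain_cons.mp h2).2
          cases a with
          | Lu =>
            left; left
            exact ⟨t, (ih true (k+1) t).mpr ⟨hlen, hpm, by simpa using h3, by simp⟩, rfl⟩
          | Lm =>
            right
            have hcount : t.count PMLetter.Lm = k := by
              have := h3; simp [List.count_cons] at this; omega
            have hhd : t.head? ≠ some PMLetter.R := by
              intro hcon
              have := (List.isChain_cons.mp h2).1
              cases t with
              | nil => simp at hcon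
              | cons b t' =>
                simp at hcon
                exact (this b (by simp) rfl) hcon
            exact ⟨t, (ih false k t).mpr ⟨hlen, hpm, hcount, fun _ => hhd⟩, rfl⟩
          | R =>
            left; right
            have hf : f = true := by
              cases f
              · exact absurd (h4 rfl) (by simp)
              · rfl
            subst hf
            simp only [if_true, Finset.mem_image]
            exact ⟨t, (ih true (k+1) t).mpr ⟨hlen, hpm, by simpa using h3, by simp⟩, rfl⟩

lemma cons_inj (a : PMLetter) : Function.Injective (List.cons a) := fun x y h => by
  simpa using h

lemma disj_img (s t : Finset (List PMLetter)) (a b : PMLetter) (hab : a ≠ b) :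
    Disjoint (s.image (List.cons a)) (t.image (List.cons b)) := by
  simp only [Finset.disjoint_left, Finset.mem_image]
  rintro x ⟨u, _, rfl⟩ ⟨v, _, hv⟩
  exact hab ((List.cons_eq_cons.mp hv).1).symm

lemma WF_card_zero_t (m : ℕ) : (WF true (m+1) 0).card = 2 * (WF true m 0).card := by
  rw [WF, if_pos rfl]
  rw [Finset.card_union_of_disjoint (disj_img _ _ _ _ (by simp)),
    Finset.card_image_of_injective _ (cons_inj _), Finset.card_image_of_injective _ (cons_inj _)]
  ring

lemma WF_card_zero_f (m : ℕ) : (WF false (m+1) 0).card = (WF true m 0).card := by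
  rw [WF]
  rw [if_neg (by simp), Finset.union_empty]
  rw [Finset.card_image_of_injective _ (cons_inj _)]

lemma WF_card_succ_t (m k : ℕ) :
    (WF true (m+1) (k+1)).card = 2 * (WF true m (k+1)).card + (WF false m k).card := by
  rw [WF, if_pos rfl]
  rw [Finset.card_union_of_disjoint, Finset.card_union_of_disjoint (disj_img _ _ _ _ (by simp)),
    Finset.card_image_of_injective _ (cons_inj _), Finset.card_image_of_injective _ (cons_inj _),
    Finset.card_image_of_injective _ (cons_inj _)]
  · ring
  · refine Finset.disjoint_union_left.mpr ⟨disj_img _ _ _ _ (by simp), disj_img _ _ _ _ (by simp)⟩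

lemma WF_card_succ_f (m k : ℕ) :
    (WF false (m+1) (k+1)).card = (WF true m (k+1)).card + (WF false m k).card := by
  rw [WF]
  rw [if_neg (by simp), Finset.union_empty]
  rw [Finset.card_union_of_disjoint (disj_img _ _ _ _ (by simp)),
    Finset.card_image_of_injective _ (cons_inj _), Finset.card_image_of_injective _ (cons_inj _)]

lemma Sf_zero (j : ℕ) : Sf 0 j = 0 := rfl

lemma Sf_doubling (m : ℕ) : Sf (m+2) 0 = 2 * Sf (m+1) 0 := by
  rw [daggerS]
  rw [show (0:ℕ)+1 = 1 from rfl, Finset.range_one, Finset.sum_singleton]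
  ring

lemma WF_card_gt (f : Bool) (m k : ℕ) (h : m < k) : (WF f m k).card = 0 := by
  rw [Finset.card_eq_zero, Finset.eq_empty_iff_forall_notMem]
  intro w hw
  obtain ⟨h1, _, h3, _⟩ := (WF_mem m f k w).mp hw
  have := List.count_le_length (a := PMLetter.Lm) (l := w)
  omega

lemma AB : ∀ m k d : ℕ, m = k + d →
    (WF true m k).card = Sf (d+1) k ∧ (WF false m k).card + Sf d k = Sf (d+1) k := by
  intro m
  induction m with
  | zero =>
    intro k d h
    obtain ⟨rfl, rfl⟩ : k = 0 ∧ d = 0 := by omega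
    constructor
    · rw [WF]; simp [Sf_one]
    · rw [WF]; simp [Sf_one, Sf_zero]
  | succ m ih =>
    intro k d h
    cases k with
    | zero =>
      have hd : d = m + 1 := by omega
      subst hd
      obtain ⟨ihA, ihB⟩ := ih 0 m (by omega)
      rw [WF_card_zero_t, WF_card_zero_f, ihA]
      have hdb := Sf_doubling m
      rw [show m + 1 + 1 = m + 2 from rfl]
      constructor <;> omega
    | succ k =>
      have hm : m = k + d := by omega
      obtain ⟨ihA, ihB⟩ := ih k d hm
      cases d with
      | zero =>
        have h0 : (WF true m (k+1)).card = 0 := WF_card_gt _ _ _ (by omega)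
        rw [WF_card_succ_t, WF_card_succ_f, h0]
        have hz1 : Sf 0 (k+1) = 0 := rfl
        have hz2 : Sf (0+1) (k+1) = 1 := Sf_one _
        rw [Sf_zero, Sf_one] at ihB
        constructor <;> omega
      | succ d =>
        obtain ⟨ihA', _⟩ := ih (k+1) d (by omega)
        have hp := pascalS (d+1) k
        rw [WF_card_succ_t, WF_card_succ_f, ihA']
        constructor <;> omega

theorem pm_words_eq_kimberling (n k : ℕ) (hn : 1 ≤ n) (hk : k ≤ n - 1) :
    Set.ncard {w : List PMLetter | w.length = n - 1 ∧ ProperlyMarked w ∧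
        w.count PMLetter.Lm = k} = (Kimb (n - k) k).ncard ∧
    Set.ncard {w : List PMLetter | w.length = n - 1 ∧ ProperlyMarked w ∧
        w.count PMLetter.Lm = k} =
      ∑ r ∈ Finset.range (n - k), Nat.choose (n - k - 1) r * Nat.choose (r + k) r := by
  obtain ⟨d, hd⟩ : ∃ d, n - 1 = k + d := ⟨n - 1 - k, by omega⟩
  have hnk : n - k = d + 1 := by omega
  have hw : {w : List PMLetter | w.length = n - 1 ∧ ProperlyMarked w ∧
      w.count PMLetter.Lm = k} = ↑(WF true (n-1) k) := by
    ext w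
    rw [Finset.mem_coe, WF_mem]
    simp
  have hwc : Set.ncard {w : List PMLetter | w.length = n - 1 ∧ ProperlyMarked w ∧
      w.count PMLetter.Lm = k} = Sf (d+1) k := by
    rw [hw, Set.ncard_coe_finset]
    exact (AB (n-1) k d hd).1
  have hkc : (Kimb (n - k) k).ncard = Sf (d+1) k := by
    rw [hnk, ← KF_coe (d+1) k, Set.ncard_coe_finset]
    exact KF_card_S d k
  refine ⟨by rw [hwc, hkc], ?_⟩
  rw [hwc, hnk]
  rfl
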